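/- Let X have more than two points and let [f₁,f₂] and [g₁,g₂] be distinct vertices of the line graph L(Γ(C(X))). Then there exists a vertex [h₁,h₂] of L(Γ(C(X))) adjacent to both [f₁,f₂] and [g₁,g₂] if and only if Z(f_i) ∩ Z(g_j) ≠ ∅ for some i, j ∈ {1,2}. -/

import Mathlib

open Set

/-- The zero set of a continuous real-valued function. -/
def zeroSet {X : Type*} [TopologicalSpace X] (f : C(X, ℝ)) : Set X := {x | f x = 0}

/-- The zero-set intersection graph `Γ(C(X))`: vertices are the non-units of `C(X)`
(those `f` with nonempty zero set), and distinct vertices `f`, `g` are adjacent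
iff `Z(f) ∩ Z(g) ≠ ∅`. -/
def zGraph (X : Type*) [TopologicalSpace X] :
    SimpleGraph {f : C(X, ℝ) // (zeroSet f).Nonempty} where
  Adj f g := f ≠ g ∧ (zeroSet f.1 ∩ zeroSet g.1).Nonempty
  symm := ⟨by
    rintro f g ⟨hne, hx⟩
    exact ⟨hne.symm, by rwa [Set.inter_comm]⟩⟩
  loopless := ⟨fun f h => h.1 rfl⟩

/-- For X with more than two points and distinct vertices [f₁,f₂], [g₁,g₂] of the line
graph of Γ(C(X)): a common neighbour exists iff Z(f_i) ∩ Z(g_j) ≠ ∅ for some i, j. -/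
theorem lineGraph_exists_common_neighbor_iff
    (X : Type*) [TopologicalSpace X] [T2Space X] [CompletelyRegularSpace X]
    (hX : ∃ a b c : X, a ≠ b ∧ a ≠ c ∧ b ≠ c)
    (f g : Fin 2 → {f : C(X, ℝ) // (zeroSet f).Nonempty})
    (hf : (zGraph X).Adj (f 0) (f 1)) (hg : (zGraph X).Adj (g 0) (g 1))
    (hne : s(f 0, f 1) ≠ s(g 0, g 1)) :
    (∃ e : (zGraph X).edgeSet,
        (zGraph X).lineGraph.Adj e ⟨s(f 0, f 1), (zGraph X).mem_edgeSet.mpr hf⟩ ∧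
        (zGraph X).lineGraph.Adj e ⟨s(g 0, g 1), (zGraph X).mem_edgeSet.mpr hg⟩) ↔
      ∃ i j : Fin 2, (zeroSet (f i).1 ∩ zeroSet (g j).1).Nonempty := by
  constructor
  · rintro ⟨e, hef, heg⟩
    rw [SimpleGraph.lineGraph_adj_iff_exists] at hef heg
    obtain ⟨hef1, v, hve, hvf⟩ := hef
    obtain ⟨heg1, u, hue, hug⟩ := heg
    rw [Sym2.mem_iff] at hvf hug
    obtain ⟨i, hvi⟩ : ∃ i : Fin 2, v = f i := by
      rcases hvf with h | h
      · exact ⟨0, h⟩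
      · exact ⟨1, h⟩
    obtain ⟨j, huj⟩ : ∃ j : Fin 2, u = g j := by
      rcases hug with h | h
      · exact ⟨0, h⟩
      · exact ⟨1, h⟩
    refine ⟨i, j, ?_⟩
    by_cases hvu : v = u
    · have : f i = g j := hvi ▸ hvu ▸ huj ▸ rfl
      rw [← this, Set.inter_self]
      exact (f i).2
    · have he : (e : Sym2 _) = s(v, u) := (Sym2.mem_and_mem_iff hvu).mp ⟨hve, hue⟩
      have hadj : (zGraph X).Adj v u := (zGraph X).mem_edgeSet.mp (he ▸ e.2)
      rw [← hvi, ← huj]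
      exact hadj.2
  · rintro ⟨i, j, x, hxf, hxg⟩
    -- get a point y ≠ x
    obtain ⟨a, b, c, hab, hac, hbc⟩ := hX
    obtain ⟨y, hyx⟩ : ∃ y : X, y ≠ x := by
      by_cases h : a = x
      · exact ⟨b, fun hb => hab (h.trans hb.symm)⟩
      · exact ⟨a, h⟩
    -- Urysohn function: φ x = 0, φ y = 1
    obtain ⟨φ, hφc, hφx, hφy⟩ := CompletelyRegularSpace.completely_regular x {y}
      isClosed_singleton (by simp [hyx.symm])
    have hφy1 : φ y = 1 := hφy rfl
    set ψ : C(X, ℝ) := ⟨fun z => (φ z : ℝ), (continuous_subtype_val.comp hφc)⟩ with hψ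
    have hψx : ψ x = 0 := by simp [hψ, hφx]
    have hψy : ψ y = 1 := by simp [hψ, hφy1]
    -- choose a scalar c avoiding finitely many values
    obtain ⟨cc, hcc⟩ := Infinite.exists_notMem_finset
      ({(f 0).1 y, (f 1).1 y, (g 0).1 y, (g 1).1 y, 0} : Finset ℝ)
    simp only [Finset.mem_insert, Finset.mem_singleton, not_or] at hcc
    set w : {f : C(X, ℝ) // (zeroSet f).Nonempty} :=
      ⟨cc • ψ, ⟨x, by simp [zeroSet, hψx]⟩⟩ with hw
    have hwx : x ∈ zeroSet w.1 := by simp [hw, zeroSet, hψx]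
    have hwy : w.1 y = cc := by simp [hw, hψy]
    have hwf0 : w ≠ f 0 := fun h => hcc.1 (by rw [← h, hwy])
    have hwf1 : w ≠ f 1 := fun h => hcc.2.1 (by rw [← h, hwy])
    have hwg0 : w ≠ g 0 := fun h => hcc.2.2.1 (by rw [← h, hwy])
    have hwg1 : w ≠ g 1 := fun h => hcc.2.2.2.1 (by rw [← h, hwy])
    have hwF : w ∉ s(f 0, f 1) := by rw [Sym2.mem_iff]; tauto
    have hwG : w ∉ s(g 0, g 1) := by rw [Sym2.mem_iff]; tauto
    have hfiF : f i ∈ s(f 0, f 1) := by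
      rw [Sym2.mem_iff]; fin_cases i <;> simp
    have hgjG : g j ∈ s(g 0, g 1) := by
      rw [Sym2.mem_iff]; fin_cases j <;> simp
    -- main case split
    by_cases hcase : f i ≠ g j ∧ s(f i, g j) ≠ s(f 0, f 1) ∧ s(f i, g j) ≠ s(g 0, g 1)
    · obtain ⟨h1, h2, h3⟩ := hcase
      have hadj : (zGraph X).Adj (f i) (g j) := ⟨h1, ⟨x, hxf, hxg⟩⟩
      refine ⟨⟨s(f i, g j), (zGraph X).mem_edgeSet.mpr hadj⟩, ?_, ?_⟩
      · rw [SimpleGraph.lineGraph_adj_iff_exists]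
        exact ⟨fun h => h2 (congrArg Subtype.val h), f i, Sym2.mem_mk_left _ _, hfiF⟩
      · rw [SimpleGraph.lineGraph_adj_iff_exists]
        exact ⟨fun h => h3 (congrArg Subtype.val h), g j, Sym2.mem_mk_right _ _, hgjG⟩
    · -- there is a vertex v in both edges with x in its zero set
      obtain ⟨v, hvF, hvG, hvx⟩ :
          ∃ v, v ∈ s(f 0, f 1) ∧ v ∈ s(g 0, g 1) ∧ x ∈ zeroSet v.1 := by
        push_neg at hcase
        by_cases h1 : f i = g j
        · exact ⟨f i, hfiF, h1 ▸ hgjG, hxf⟩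
        · by_cases h2 : s(f i, g j) = s(f 0, f 1)
          · exact ⟨g j, h2 ▸ Sym2.mem_mk_right _ _, hgjG, hxg⟩
          · exact ⟨f i, hfiF, (hcase h1 h2) ▸ Sym2.mem_mk_left _ _, hxf⟩
      have hvw : v ≠ w := by
        rw [Sym2.mem_iff] at hvF
        rcases hvF with h | h <;> rw [h] <;> [exact hwf0.symm; exact hwf1.symm]
      have hadj : (zGraph X).Adj v w := ⟨hvw, ⟨x, hvx, hwx⟩⟩
      refine ⟨⟨s(v, w), (zGraph X).mem_edgeSet.mpr hadj⟩, ?_, ?_⟩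
      · rw [SimpleGraph.lineGraph_adj_iff_exists]
        refine ⟨fun h => hwF ?_, v, Sym2.mem_mk_left _ _, hvF⟩
        have := congrArg Subtype.val h
        simp only at this
        rw [← this]; exact Sym2.mem_mk_right _ _
      · rw [SimpleGraph.lineGraph_adj_iff_exists]
        refine ⟨fun h => hwG ?_, v, Sym2.mem_mk_left _ _, hvG⟩
        have := congrArg Subtype.val h
        simp only at this
        rw [← this]; exact Sym2.mem_mk_right _ _
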